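/- For any finite set P of at least two points in the plane, there exists a subset P' ⊆ P which either consists of two points whose diametral circle has all of P in its closed disk, or consists of three points forming an acute (or right) angled triangle whose circumcircle equals the minimum enclosing circle of P; in either case CC(P') = C(P). -/

import Mathlib

noncomputable section

open Metric EuclideanGeometry Real

section Aux

open RealInnerProductSpace

local notation "Pt" => EuclideanSpace ℝ (Fin 2)

lemma my_angle_le_pi_div_two {x y : Pt} (h : 0 ≤ ⟪x, y⟫) :
    InnerProductGeometry.angle x y ≤ π / 2 := by
  by_contra hlt
  push_neg at hlt
  have hcos : Real.cos (InnerProductGeometry.angle x y) < 0 :=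
    Real.cos_neg_of_pi_div_two_lt_of_lt hlt
      (lt_of_le_of_lt (InnerProductGeometry.angle_le_pi x y) (by linarith [Real.pi_pos]))
  rw [InnerProductGeometry.cos_angle] at hcos
  have : 0 ≤ ⟪x, y⟫ / (‖x‖ * ‖y‖) :=
    div_nonneg h (mul_nonneg (norm_nonneg _) (norm_nonneg _))
  linarith

lemma my_inner_nonneg {a b d : Pt} {ρ α β γ : ℝ} (hρ : 0 < ρ)
    (ha : ‖a‖ = ρ) (hb : ‖b‖ = ρ) (hd : ‖d‖ = ρ)
    (hα : 0 ≤ α) (hβ : 0 ≤ β) (hγ : 0 ≤ γ)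
    (hsum : α + β + γ = 1) (hcomb : α • a + β • b + γ • d = 0) :
    0 ≤ ⟪b - a, d - a⟫ := by
  have hra : ⟪a, a⟫ = ρ ^ 2 := by rw [real_inner_self_eq_norm_sq, ha]
  have hrb : ⟪b, b⟫ = ρ ^ 2 := by rw [real_inner_self_eq_norm_sq, hb]
  have hrd : ⟪d, d⟫ = ρ ^ 2 := by rw [real_inner_self_eq_norm_sq, hd]
  have hxle : |⟪a, b⟫| ≤ ρ ^ 2 := by
    have := abs_real_inner_le_norm a b; rw [ha, hb] at this; nlinarith [this]
  have hyle : |⟪a, d⟫| ≤ ρ ^ 2 := by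
    have := abs_real_inner_le_norm a d; rw [ha, hd] at this; nlinarith [this]
  have hzle : |⟪b, d⟫| ≤ ρ ^ 2 := by
    have := abs_real_inner_le_norm b d; rw [hb, hd] at this; nlinarith [this]
  have ea : α * ρ ^ 2 + β * ⟪a, b⟫ + γ * ⟪a, d⟫ = 0 := by
    have h0 : ⟪α • a + β • b + γ • d, a⟫ = 0 := by rw [hcomb, inner_zero_left]
    simp only [inner_add_left, real_inner_smul_left] at h0
    rw [real_inner_comm a b, real_inner_comm a d, hra] at h0
    linarith
  have eb : α * ⟪a, b⟫ + β * ρ ^ 2 + γ * ⟪b, d⟫ = 0 := by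
    have h0 : ⟪α • a + β • b + γ • d, b⟫ = 0 := by rw [hcomb, inner_zero_left]
    simp only [inner_add_left, real_inner_smul_left] at h0
    rw [real_inner_comm b d, hrb] at h0
    linarith
  have hgoal : ⟪b - a, d - a⟫ = ρ ^ 2 + ⟪b, d⟫ - ⟪a, b⟫ - ⟪a, d⟫ := by
    simp only [inner_sub_left, inner_sub_right]
    rw [real_inner_comm a b, hra]
    ring
  rw [hgoal]
  rcases eq_or_lt_of_le hγ with hγ0 | hγpos
  · -- γ = 0
    have hγ0 : γ = 0 := hγ0.symm
    subst hγ0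
    rcases eq_or_ne ⟪a, b⟫ (ρ ^ 2) with hx | hx
    · -- a = b, contradiction
      exfalso
      have hn : ‖a - b‖ ^ 2 = 0 := by
        rw [norm_sub_sq_real, ha, hb, hx]; ring
      have hab : a = b := by
        have h0 : a - b = 0 := by
          rwa [pow_eq_zero_iff (by norm_num : (2:ℕ) ≠ 0), norm_eq_zero] at hn
        rwa [sub_eq_zero] at h0
      rw [hab, zero_smul, add_zero, ← add_smul, show α + β = 1 by linarith,
        one_smul] at hcomb
      rw [hcomb, norm_zero] at hb
      nlinarith
    · have hαβ : α = β := by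
        have h1 : (α - β) * (ρ ^ 2 - ⟪a, b⟫) = 0 := by linarith [ea, eb]
        rcases mul_eq_zero.mp h1 with h | h
        · linarith
        · exact absurd (by linarith : ⟪a, b⟫ = ρ ^ 2) hx
      have hαh : α = 1 / 2 := by linarith
      have hxr : ⟪a, b⟫ = -ρ ^ 2 := by nlinarith [ea]
      have hab : a = -b := by
        have hn : ‖a + b‖ ^ 2 = 0 := by
          rw [norm_add_sq_real, ha, hb, hxr]; ring
        have h0 : a + b = 0 := by
          rwa [pow_eq_zero_iff (by norm_num : (2:ℕ) ≠ 0), norm_eq_zero] at hn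
        exact eq_neg_of_add_eq_zero_left h0
      have hyz : ⟪a, d⟫ = -⟪b, d⟫ := by
        rw [hab, inner_neg_left]
      rcases abs_le.mp hzle with ⟨hz1, hz2⟩
      rw [hxr, hyz]
      linarith
  · -- γ > 0
    rcases abs_le.mp hxle with ⟨hx1, hx2⟩
    rcases abs_le.mp hzle with ⟨hz1, hz2⟩
    have h2β : β ≤ 1 / 2 := by
      have m1 := mul_le_mul_of_nonneg_left hx1 hα
      have m2 := mul_le_mul_of_nonneg_left hz1 hγ
      nlinarith [eb, mul_pos hρ hρ]
    have hkey : γ * (ρ ^ 2 + ⟪b, d⟫ - ⟪a, b⟫ - ⟪a, d⟫)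
        = (1 - 2 * β) * (ρ ^ 2 - ⟪a, b⟫) := by
      have h1 : (α - β) * (ρ ^ 2 - ⟪a, b⟫) = γ * (⟪b, d⟫ - ⟪a, d⟫) := by
        linarith [ea, eb]
      linear_combination (ρ ^ 2 - ⟪a, b⟫) * hsum - h1
    have hpos : 0 ≤ γ * (ρ ^ 2 + ⟪b, d⟫ - ⟪a, b⟫ - ⟪a, d⟫) := by
      rw [hkey]
      exact mul_nonneg (by linarith) (by linarith)
    exact (mul_nonneg_iff_of_pos_left hγpos).mp hpos

end Aux

/-- `IsMEC c ρ P` : the circle with center `c` and radius `ρ` is the minimum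
enclosing circle of `P`: its closed disk contains `P`, any circle whose closed
disk contains `P` has radius at least `ρ`, and it is the unique such circle of
radius `ρ`. -/
def IsMEC (c : EuclideanSpace ℝ (Fin 2)) (ρ : ℝ)
    (P : Set (EuclideanSpace ℝ (Fin 2))) : Prop :=
  P ⊆ Metric.closedBall c ρ ∧
    ∀ c' ρ', P ⊆ Metric.closedBall c' ρ' → ρ ≤ ρ' ∧ (ρ' = ρ → c' = c)

set_option maxHeartbeats 2000000
open RealInnerProductSpace

/-- For any finite set `P` of at least two points of the plane, there is a
subset `P' ⊆ P` consisting either of two points whose diametral circle is the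
minimum enclosing circle of `P`, or of three points forming an acute (or right)
angled triangle whose circumcircle is the minimum enclosing circle of `P`. -/
theorem exists_MEC_determining_subset
    (P : Set (EuclideanSpace ℝ (Fin 2))) (hP : P.Finite) (h2 : 2 ≤ P.ncard) :
    ∃ (c : EuclideanSpace ℝ (Fin 2)) (ρ : ℝ), IsMEC c ρ P ∧
      ((∃ p₁ ∈ P, ∃ p₂ ∈ P, p₁ ≠ p₂ ∧
          c = midpoint ℝ p₁ p₂ ∧ ρ = dist p₁ p₂ / 2) ∨
       (∃ p₁ ∈ P, ∃ p₂ ∈ P, ∃ p₃ ∈ P, p₁ ≠ p₂ ∧ p₂ ≠ p₃ ∧ p₁ ≠ p₃ ∧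
          dist c p₁ = ρ ∧ dist c p₂ = ρ ∧ dist c p₃ = ρ ∧
          EuclideanGeometry.angle p₂ p₁ p₃ ≤ π / 2 ∧
          EuclideanGeometry.angle p₁ p₂ p₃ ≤ π / 2 ∧
          EuclideanGeometry.angle p₁ p₃ p₂ ≤ π / 2)) := by
  classical
  obtain ⟨q₁, hq₁, q₂, hq₂, hq12⟩ : ∃ a ∈ P, ∃ b ∈ P, a ≠ b :=
    (Set.one_lt_ncard hP).mp (by omega)
  set t : Finset (EuclideanSpace ℝ (Fin 2)) := hP.toFinset with ht
  have htmem : ∀ p, p ∈ t ↔ p ∈ P := fun p => hP.mem_toFinset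
  have htne : t.Nonempty := ⟨q₁, (htmem q₁).2 hq₁⟩
  set f : EuclideanSpace ℝ (Fin 2) → ℝ :=
    fun c => t.sup' htne fun p => dist c p with hf
  have hle : ∀ c p, p ∈ P → dist c p ≤ f c := fun c p hp =>
    Finset.le_sup' _ ((htmem p).2 hp)
  have hfle : ∀ c r, (∀ p ∈ P, dist c p ≤ r) → f c ≤ r := fun c r h =>
    Finset.sup'_le _ _ fun p hp => h p ((htmem p).1 hp)
  have hflt : ∀ c r, (∀ p ∈ P, dist c p < r) → f c < r := fun c r h =>
    (Finset.sup'_lt_iff htne).2 fun p hp => h p ((htmem p).1 hp)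
  have hlip : ∀ c₁ c₂, f c₁ ≤ f c₂ + dist c₁ c₂ := fun c₁ c₂ =>
    hfle _ _ fun p hp =>
      (dist_triangle c₁ c₂ p).trans (by linarith [hle c₂ p hp])
  have hcont : Continuous f := by
    have : LipschitzWith 1 f := LipschitzWith.of_dist_le_mul fun c₁ c₂ => by
      rw [Real.dist_eq, NNReal.coe_one, one_mul, abs_sub_le_iff]
      constructor
      · linarith [hlip c₁ c₂]
      · linarith [hlip c₂ c₁, dist_comm c₂ c₁ ▸ (rfl : dist c₂ c₁ = dist c₂ c₁),
          (dist_comm c₂ c₁ : dist c₂ c₁ = dist c₁ c₂)]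
    exact this.continuous
  have hq₀ : (0:ℝ) ≤ f q₁ := le_trans dist_nonneg (hle q₁ q₁ hq₁)
  obtain ⟨c, hcK, hcmin⟩ := (isCompact_closedBall q₁ (f q₁)).exists_isMinOn
    ⟨q₁, mem_closedBall_self hq₀⟩ hcont.continuousOn
  have hglob : ∀ c', f c ≤ f c' := by
    intro c'
    by_cases h : c' ∈ closedBall q₁ (f q₁)
    · exact hcmin h
    · have h1 : f q₁ < dist c' q₁ := by
        rw [mem_closedBall] at h; push_neg at h; exact h
      have h2 := hle c' q₁ hq₁
      have h0 : f c ≤ f q₁ := hcmin (mem_closedBall_self hq₀)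
      linarith
  set ρ := f c with hρdef
  have hencl : P ⊆ closedBall c ρ := fun p hp => by
    rw [mem_closedBall, dist_comm]; exact hle c p hp
  have hρpos : 0 < ρ := by
    have h1 := hle c q₁ hq₁
    have h2 := hle c q₂ hq₂
    have h3 := dist_triangle q₁ c q₂
    have h4 : 0 < dist q₁ q₂ := dist_pos.2 hq12
    have h5 : dist q₁ c = dist c q₁ := dist_comm _ _
    linarith
  have hmin : ∀ c' r', P ⊆ closedBall c' r' → ρ ≤ r' := by
    intro c' r' h
    refine le_trans (hglob c') (hfle c' r' fun p hp => ?_)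
    have := h hp
    rw [mem_closedBall] at this
    rwa [dist_comm]
  have huniq : ∀ c', P ⊆ closedBall c' ρ → c' = c := by
    intro c' h
    by_contra hne
    have hd : 0 < dist c' c := dist_pos.2 hne
    set m := midpoint ℝ c c' with hm
    have hlt : ∀ p ∈ P, dist m p < ρ := by
      intro p hp
      have h1 : dist p c ≤ ρ := by have := hencl hp; rwa [mem_closedBall] at this
      have h2 : dist p c' ≤ ρ := by have := h hp; rwa [mem_closedBall] at this
      have hpar := parallelogram_law_with_norm ℝ (p - c) (p - c')
      have hmid : (2:ℝ) • (p - m) = (p - c) + (p - c') := by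
        rw [hm, midpoint_eq_smul_add]
        rw [invOf_eq_inv]
        module
      have h3 : ‖(p - c) + (p - c')‖ = 2 * ‖p - m‖ := by
        rw [← hmid, norm_smul]
        simp
      have h4 : ‖(p - c) - (p - c')‖ = dist c' c := by
        rw [show (p - c) - (p - c') = c' - c by abel, ← dist_eq_norm]
      have h5 : ‖p - c‖ = dist p c := (dist_eq_norm p c).symm
      have h6 : ‖p - c'‖ = dist p c' := (dist_eq_norm p c').symm
      have h7 : dist m p = ‖p - m‖ := by rw [dist_comm, dist_eq_norm]
      have h8 : (2 * ‖p - m‖) ^ 2 + dist c' c ^ 2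
          = 2 * dist p c ^ 2 + 2 * dist p c' ^ 2 := by
        rw [← h3, ← h4, ← h5, ← h6]; linear_combination hpar
      have h8' : 4 * ‖p - m‖ ^ 2 + dist c' c ^ 2
          = 2 * dist p c ^ 2 + 2 * dist p c' ^ 2 := by linear_combination h8
      have hA : dist p c ^ 2 ≤ ρ ^ 2 := pow_le_pow_left₀ dist_nonneg h1 2
      have hB : dist p c' ^ 2 ≤ ρ ^ 2 := pow_le_pow_left₀ dist_nonneg h2 2
      have h9 : ‖p - m‖ ^ 2 < ρ ^ 2 := by nlinarith [pow_pos hd 2]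
      rw [h7]
      exact lt_of_pow_lt_pow_left₀ 2 hρpos.le h9
    have := hflt m ρ hlt
    have := hglob m
    linarith
  set S : Set (EuclideanSpace ℝ (Fin 2)) := {p | p ∈ P ∧ dist c p = ρ} with hS
  have hSP : S ⊆ P := fun p hp => hp.1
  have hSfin : S.Finite := hP.subset hSP
  have hchull : c ∈ convexHull ℝ S := by
    by_contra hnot
    obtain ⟨φ, u, hcu, hub⟩ := _root_.geometric_hahn_banach_point_closed
      (convex_convexHull ℝ S) (hSfin.isCompact_convexHull (𝕜 := ℝ)).isClosed hnot
    set v := (InnerProductSpace.toDual ℝ (EuclideanSpace ℝ (Fin 2))).symm φ with hv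
    have hvip : ∀ w, ⟪v, w⟫ = φ w := fun w => InnerProductSpace.toDual_symm_apply
    set δ := u - φ c with hδ
    have hδpos : 0 < δ := sub_pos.2 hcu
    have hSv : ∀ p ∈ S, δ ≤ ⟪v, p - c⟫ := by
      intro p hp
      have := hub p (subset_convexHull ℝ S hp)
      rw [inner_sub_right, hvip, hvip]
      linarith
    obtain ⟨p₀, hp₀t, hp₀⟩ := Finset.exists_mem_eq_sup' htne fun p => dist c p
    have hp₀S : p₀ ∈ S := ⟨(htmem _).1 hp₀t, hp₀.symm⟩
    have hvne : v ≠ 0 := by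
      intro h0
      have := hSv p₀ hp₀S
      rw [h0, inner_zero_left] at this
      linarith
    have hvpos : 0 < ‖v‖ := norm_pos_iff.2 hvne
    set g : EuclideanSpace ℝ (Fin 2) → ℝ :=
      fun p => if dist c p = ρ then 1 else ρ - dist c p with hg
    have hgpos : ∀ p ∈ t, 0 < g p := by
      intro p hp
      by_cases hd : dist c p = ρ
      · simp [hg, hd]
      · have h1 : dist c p ≤ ρ := hle c p ((htmem p).1 hp)
        simp only [hg, if_neg hd]
        have := lt_of_le_of_ne h1 hd
        linarith
    set η := t.inf' htne g with hη
    have hηpos : 0 < η := (Finset.lt_inf'_iff htne).2 hgpos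
    set ε := min (δ / ‖v‖ ^ 2) (η / (2 * ‖v‖)) with hε
    have hεpos : 0 < ε := lt_min (by positivity) (by positivity)
    have hεv2 : ε * ‖v‖ ^ 2 ≤ δ := by
      have h1 : ε ≤ δ / ‖v‖ ^ 2 := min_le_left _ _
      rw [le_div_iff₀ (by positivity)] at h1
      linarith
    have hεv : ε * ‖v‖ ≤ η / 2 := by
      have h1 : ε ≤ η / (2 * ‖v‖) := min_le_right _ _
      rw [le_div_iff₀ (by positivity)] at h1
      linarith
    set c₂ := c + ε • v with hc₂
    have hdcc₂ : dist c₂ c = ε * ‖v‖ := by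
      rw [hc₂, dist_eq_norm]
      simp [norm_smul, abs_of_pos hεpos]
    have hstep : ∀ p ∈ P, dist c₂ p < ρ := by
      intro p hp
      by_cases hd : dist c p = ρ
      · have hpS : p ∈ S := ⟨hp, hd⟩
        have hip := hSv p hpS
        have hd2 : dist c₂ p ^ 2
            = dist c p ^ 2 - 2 * ε * ⟪v, p - c⟫ + ε ^ 2 * ‖v‖ ^ 2 := by
          have he : c₂ - p = -((p - c) - ε • v) := by rw [hc₂]; abel
          rw [dist_eq_norm, he, norm_neg, norm_sub_sq_real, real_inner_smul_right,
            norm_smul, Real.norm_eq_abs, real_inner_comm]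
          rw [show dist c p = ‖p - c‖ by rw [dist_comm, dist_eq_norm]]
          rw [mul_pow, abs_of_pos hεpos]
          ring
        have h9 : dist c₂ p ^ 2 < ρ ^ 2 := by
          rw [hd2, hd]
          nlinarith [hip, hεpos, hεv2]
        exact lt_of_pow_lt_pow_left₀ 2 hρpos.le h9
      · have h1 : dist c p < ρ :=
          lt_of_le_of_ne (hle c p hp) hd
        have h2 : η ≤ g p := Finset.inf'_le _ ((htmem p).2 hp)
        rw [hg] at h2
        simp only [if_neg hd] at h2
        calc dist c₂ p ≤ dist c₂ c + dist c p := dist_triangle _ _ _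
          _ = ε * ‖v‖ + dist c p := by rw [hdcc₂]
          _ < ρ := by linarith [hηpos]
    have h1 := hflt c₂ ρ hstep
    have h2 := hglob c₂
    linarith
  obtain ⟨ι, hι, z, w, hzS, hai, hwpos, hw1, hzc⟩ :=
    eq_pos_convex_span_of_mem_convexHull hchull
  have hzdist : ∀ i, dist c (z i) = ρ := fun i => (hzS (Set.mem_range_self i)).2
  have hzP : ∀ i, z i ∈ P := fun i => (hzS (Set.mem_range_self i)).1
  have hznorm : ∀ i, ‖z i - c‖ = ρ := fun i => by
    rw [← dist_eq_norm, dist_comm]; exact hzdist i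
  have hcard : Fintype.card ι ≤ 3 := by
    have h1 := hai.card_le_finrank_succ
    have h2 : Module.finrank ℝ (vectorSpan ℝ (Set.range z)) ≤ 2 := by
      have h3 := Submodule.finrank_le (vectorSpan ℝ (Set.range z))
      rwa [finrank_euclideanSpace_fin] at h3
    omega
  refine ⟨c, ρ, ⟨hencl, fun c' ρ' h => ⟨hmin c' ρ' h, fun hr => huniq c' (hr ▸ h)⟩⟩, ?_⟩
  clear_value t f ρ S
  have hc4 : Fintype.card ι = 0 ∨ Fintype.card ι = 1 ∨ Fintype.card ι = 2 ∨
      Fintype.card ι = 3 := by omega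
  rcases hc4 with h0 | h1 | hc2 | hc3
  · -- card 0: impossible
    exfalso
    haveI := Fintype.card_eq_zero_iff.mp h0
    rw [Finset.univ_eq_empty, Finset.sum_empty] at hw1
    exact one_ne_zero hw1.symm
  · -- card 1: impossible
    exfalso
    obtain ⟨e⟩ : Nonempty (ι ≃ Fin 1) := ⟨Fintype.equivFinOfCardEq h1⟩
    have hs := Equiv.sum_comp e.symm w
    rw [hw1, Fin.sum_univ_one] at hs
    have hz' := Equiv.sum_comp e.symm (fun i => w i • z i)
    rw [hzc, Fin.sum_univ_one] at hz'
    rw [hs, one_smul] at hz'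
    have := hzdist (e.symm 0)
    rw [hz'] at this
    simp at this
    linarith
  · -- card 2
    left
    obtain ⟨e⟩ : Nonempty (ι ≃ Fin 2) := ⟨Fintype.equivFinOfCardEq hc2⟩
    obtain ⟨a, hadef⟩ : ∃ x, x = z (e.symm 0) := ⟨_, rfl⟩
    obtain ⟨b, hbdef⟩ : ∃ x, x = z (e.symm 1) := ⟨_, rfl⟩
    obtain ⟨α, hαdef⟩ : ∃ x, x = w (e.symm 0) := ⟨_, rfl⟩
    obtain ⟨β, hβdef⟩ : ∃ x, x = w (e.symm 1) := ⟨_, rfl⟩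
    have hs : α + β = 1 := by
      have h := Equiv.sum_comp e.symm w
      rw [hw1, Fin.sum_univ_two] at h
      rw [hαdef, hβdef]; exact h
    have hcc : α • a + β • b = c := by
      have h := Equiv.sum_comp e.symm (fun i => w i • z i)
      rw [hzc, Fin.sum_univ_two] at h
      rw [hαdef, hβdef, hadef, hbdef]; exact h
    have hane : a ≠ b := by
      rw [hadef, hbdef]
      intro hab
      have h := hai.injective hab
      have h01 : e.symm 0 ≠ e.symm 1 := fun h' => by
        have := e.symm.injective h'
        simp at this
      exact h01 h
    have hαpos : 0 < α := hαdef ▸ hwpos (e.symm 0)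
    have hβpos : 0 < β := hβdef ▸ hwpos (e.symm 1)
    have hna' : ‖a - c‖ = ρ := by rw [hadef]; exact hznorm (e.symm 0)
    have hnb' : ‖b - c‖ = ρ := by rw [hbdef]; exact hznorm (e.symm 1)
    have haP : a ∈ P := hadef ▸ hzP (e.symm 0)
    have hbP : b ∈ P := hbdef ▸ hzP (e.symm 1)
    have hβeq : β = 1 - α := by linear_combination hs
    have hac : a - c = (1 - α) • (a - b) := by
      rw [← hcc, hβeq]; module
    have hbc : b - c = α • (b - a) := by
      rw [← hcc, hβeq]; module
    have habpos : 0 < ‖a - b‖ := by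
      rw [norm_pos_iff, sub_ne_zero]; exact hane
    have hna : ρ = (1 - α) * ‖a - b‖ := by
      rw [← hna', hac, norm_smul, Real.norm_eq_abs, abs_of_pos (by linarith)]
    have hnb : ρ = α * ‖a - b‖ := by
      rw [← hnb', hbc, norm_smul, Real.norm_eq_abs, abs_of_pos hαpos, norm_sub_rev]
    have hαhalf : α = 1 / 2 := by
      have : (1 - α) * ‖a - b‖ = α * ‖a - b‖ := by linarith
      have := mul_right_cancel₀ (ne_of_gt habpos) this
      linarith
    refine ⟨a, haP, b, hbP, hane, ?_, ?_⟩
    · rw [midpoint_eq_smul_add, invOf_eq_inv, ← hcc, hαhalf, hβeq, hαhalf]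
      module
    · rw [dist_eq_norm, hnb, hαhalf]; ring
  · -- card 3
    right
    obtain ⟨e⟩ : Nonempty (ι ≃ Fin 3) := ⟨Fintype.equivFinOfCardEq hc3⟩
    obtain ⟨p₁, hp₁def⟩ : ∃ x, x = z (e.symm 0) := ⟨_, rfl⟩
    obtain ⟨p₂, hp₂def⟩ : ∃ x, x = z (e.symm 1) := ⟨_, rfl⟩
    obtain ⟨p₃, hp₃def⟩ : ∃ x, x = z (e.symm 2) := ⟨_, rfl⟩
    obtain ⟨α, hαdef⟩ : ∃ x, x = w (e.symm 0) := ⟨_, rfl⟩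
    obtain ⟨β, hβdef⟩ : ∃ x, x = w (e.symm 1) := ⟨_, rfl⟩
    obtain ⟨γ, hγdef⟩ : ∃ x, x = w (e.symm 2) := ⟨_, rfl⟩
    have hs : α + β + γ = 1 := by
      have h := Equiv.sum_comp e.symm w
      rw [hw1, Fin.sum_univ_three] at h
      rw [hαdef, hβdef, hγdef]; exact h
    have hcc : α • p₁ + β • p₂ + γ • p₃ = c := by
      have h := Equiv.sum_comp e.symm (fun i => w i • z i)
      rw [hzc, Fin.sum_univ_three] at h
      rw [hαdef, hβdef, hγdef, hp₁def, hp₂def, hp₃def]; exact h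
    have hinj : ∀ i j : Fin 3, i ≠ j → z (e.symm i) ≠ z (e.symm j) := by
      intro i j hij hz
      exact hij (e.symm.injective (hai.injective hz))
    have hu : α • (p₁ - c) + β • (p₂ - c) + γ • (p₃ - c) = 0 := by
      have h1 : α • (p₁ - c) + β • (p₂ - c) + γ • (p₃ - c)
          = (α • p₁ + β • p₂ + γ • p₃) - (α + β + γ) • c := by module
      rw [h1, hs, hcc, one_smul, sub_self]
    have hn₁ : ‖p₁ - c‖ = ρ := by rw [hp₁def]; exact hznorm (e.symm 0)
    have hn₂ : ‖p₂ - c‖ = ρ := by rw [hp₂def]; exact hznorm (e.symm 1)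
    have hn₃ : ‖p₃ - c‖ = ρ := by rw [hp₃def]; exact hznorm (e.symm 2)
    have hα : 0 ≤ α := hαdef ▸ (hwpos (e.symm 0)).le
    have hβ : 0 ≤ β := hβdef ▸ (hwpos (e.symm 1)).le
    have hγ : 0 ≤ γ := hγdef ▸ (hwpos (e.symm 2)).le
    have hang : ∀ (q₁ q₂ q₃ : EuclideanSpace ℝ (Fin 2)),
        0 ≤ ⟪(q₂ - c) - (q₁ - c), (q₃ - c) - (q₁ - c)⟫ →
        EuclideanGeometry.angle q₂ q₁ q₃ ≤ π / 2 := by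
      intro q₁' q₂' q₃' hI
      rw [sub_sub_sub_cancel_right, sub_sub_sub_cancel_right] at hI
      exact my_angle_le_pi_div_two hI
    refine ⟨p₁, hp₁def ▸ hzP _, p₂, hp₂def ▸ hzP _, p₃, hp₃def ▸ hzP _,
      hp₁def ▸ hp₂def ▸ hinj 0 1 (by decide),
      hp₂def ▸ hp₃def ▸ hinj 1 2 (by decide),
      hp₁def ▸ hp₃def ▸ hinj 0 2 (by decide),
      hp₁def ▸ hzdist _, hp₂def ▸ hzdist _, hp₃def ▸ hzdist _, ?_, ?_, ?_⟩
    · exact hang p₁ p₂ p₃ (my_inner_nonneg hρpos hn₁ hn₂ hn₃ hα hβ hγ hs hu)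
    · refine hang p₂ p₁ p₃ (my_inner_nonneg hρpos hn₂ hn₁ hn₃ hβ hα hγ (by linarith) ?_)
      rw [← hu]; module
    · refine hang p₃ p₁ p₂ (my_inner_nonneg hρpos hn₃ hn₁ hn₂ hγ hα hβ (by linarith) ?_)
      rw [← hu]; module
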